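/- In the free group F₂ on two generators x and y, the commutator [x,y] = x y x⁻¹ y⁻¹ is not a product of two squares: there do not exist a, b ∈ F₂ with [x,y] = a² b². -/

import Mathlib

open scoped commutatorElement

/-- The Heisenberg group over `ZMod 4`. -/
structure Heis where
  a : ZMod 4
  b : ZMod 4
  c : ZMod 4
  deriving DecidableEq, Fintype

namespace Heis

instance : Mul Heis := ⟨fun p q => ⟨p.a + q.a, p.b + q.b, p.c + q.c + p.a * q.b⟩⟩
instance : One Heis := ⟨⟨0, 0, 0⟩⟩
instance : Inv Heis := ⟨fun p => ⟨-p.a, -p.b, -p.c + p.a * p.b⟩⟩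

lemma mul_def (p q : Heis) :
    p * q = ⟨p.a + q.a, p.b + q.b, p.c + q.c + p.a * q.b⟩ := rfl
lemma one_def : (1 : Heis) = ⟨0, 0, 0⟩ := rfl
lemma inv_def (p : Heis) : p⁻¹ = ⟨-p.a, -p.b, -p.c + p.a * p.b⟩ := rfl

instance : Group Heis where
  mul_assoc p q r := by
    simp only [mul_def, mk.injEq]
    refine ⟨by ring, by ring, by ring⟩
  one_mul p := by simp [mul_def, one_def]
  mul_one p := by simp [mul_def, one_def]
  inv_mul_cancel p := by
    simp only [mul_def, inv_def, one_def, mk.injEq]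
    refine ⟨by ring, by ring, by ring⟩

def x : Heis := ⟨1, 0, 0⟩
def y : Heis := ⟨0, 1, 0⟩

set_option maxHeartbeats 4000000 in
set_option maxRecDepth 10000 in
lemma key : ∀ A B : Heis, ⁅x, y⁆ ≠ A ^ 2 * B ^ 2 := by decide

end Heis

theorem stmt_0 :
    ¬ ∃ a b : FreeGroup (Fin 2),
      ⁅FreeGroup.of (0 : Fin 2), FreeGroup.of (1 : Fin 2)⁆ = a ^ 2 * b ^ 2 := by
  rintro ⟨a, b, h⟩
  have := congrArg (FreeGroup.lift ![Heis.x, Heis.y]) h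
  simp only [map_mul, map_pow, map_commutatorElement, FreeGroup.lift_apply_of,
    Matrix.cons_val_zero, Matrix.cons_val_one, Matrix.head_cons] at this
  exact Heis.key _ _ this
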